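/- Let A be an associative unital ℂ-algebra which, as a module over its center Z(A), is generated by finitely many elements a₁,...,a_m. Then every irreducible representation of A (on a ℂ-vector space, with central elements acting as scalars) is finite-dimensional, of dimension at most m. -/
import Mathlib


/-- If the ℂ-algebra A is generated as a module over its center by m elements
    a₁,…,a_m, then every irreducible representation of A on which central
    elements act as scalars is finite dimensional of dimension at most m. -/
theorem irreducible_rep_findim_of_finite_over_center
    {A : Type} [Ring A] [Algebra ℂ A] {m : ℕ} (a : Fin m → A)
    (hgen : ∀ x : A, ∃ z : Fin m → A,
      (∀ i, z i ∈ Subring.center A) ∧ x = ∑ i, z i * a i)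
    (V : Type) [AddCommGroup V] [Module ℂ V] [Nontrivial V]
    (T : A →ₐ[ℂ] Module.End ℂ V)
    (hirr : ∀ U : Submodule ℂ V, (∀ x : A, ∀ v ∈ U, T x v ∈ U) →
      U = ⊥ ∨ U = ⊤)
    (hschur : ∀ z ∈ Subring.center A, ∃ c : ℂ, T z = c • (1 : Module.End ℂ V)) :
    FiniteDimensional ℂ V ∧ Module.finrank ℂ V ≤ m := by
  obtain ⟨v₀, hv₀⟩ := exists_ne (0 : V)
  set W : Submodule ℂ V := Submodule.span ℂ (Set.range (fun i => T (a i) v₀)) with hW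
  have hkey : ∀ x : A, T x v₀ ∈ W := by
    intro x
    obtain ⟨z, hz, hx⟩ := hgen x
    have : T x v₀ = ∑ i, (T (z i)) (T (a i) v₀) := by
      rw [hx, map_sum]
      simp [Module.End.mul_apply]
    rw [this]
    refine Submodule.sum_mem _ fun i _ => ?_
    obtain ⟨c, hc⟩ := hschur (z i) (hz i)
    rw [hc]
    simp only [LinearMap.smul_apply, Module.End.one_apply]
    exact Submodule.smul_mem _ _ (Submodule.subset_span ⟨i, rfl⟩)
  have hinv : ∀ x : A, ∀ v ∈ W, T x v ∈ W := by
    intro x v hv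
    induction hv using Submodule.span_induction with
    | mem v hv =>
      obtain ⟨i, rfl⟩ := hv
      have : T x (T (a i) v₀) = T (x * a i) v₀ := by simp [Module.End.mul_apply]
      rw [this]; exact hkey _
    | zero => simp [Submodule.zero_mem]
    | add u w _ _ hu hw => rw [map_add]; exact Submodule.add_mem _ hu hw
    | smul c u _ hu => rw [map_smul]; exact Submodule.smul_mem _ _ hu
  have hv₀W : v₀ ∈ W := by
    have := hkey 1
    rwa [map_one, Module.End.one_apply] at this
  have htop : W = ⊤ := by
    rcases hirr W hinv with h | h
    · exact absurd (h ▸ hv₀W) (by simpa using hv₀)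
    · exact h
  constructor
  · classical
    refine Module.finite_def.mpr ⟨Finset.univ.image fun i => T (a i) v₀, ?_⟩
    rw [Finset.coe_image, Finset.coe_univ, Set.image_univ]
    exact htop
  · simpa using finrank_le_of_span_eq_top htop
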